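/- For every f ∈ L²(ℝ,ℂ), every N ∈ ℕ and every z ∈ ℂ, the N-th complex derivative of the Bargmann transform of f at z equals (e^{−z²/2}/π^{1/4}) ∫_ℝ conj(f(x)) He_N(√2·x − z) e^{√2·xz − x²/2} dx, where He_N is the probabilists' Hermite polynomial. -/

import Mathlib

set_option maxHeartbeats 1000000


open MeasureTheory Real Nat

/-- The Bargmann transform `L_ℂ f(z) = (e^{−z²/2}/π^{1/4}) ∫_ℝ conj(f(x)) e^{√2·xz − x²/2} dx`. -/
noncomputable def bargmann (f : ℝ → ℂ) (z : ℂ) : ℂ :=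
  Complex.exp (-z ^ 2 / 2) / ((π ^ ((1 : ℝ) / 4) : ℝ) : ℂ) *
    ∫ x : ℝ, (starRingEnd ℂ) (f x) *
      Complex.exp ((Real.sqrt 2 : ℂ) * (x : ℂ) * z - (x : ℂ) ^ 2 / 2)

noncomputable def bargE (x : ℝ) (z : ℂ) : ℂ :=
  Complex.exp ((Real.sqrt 2 : ℂ) * (x : ℂ) * z - (x : ℂ) ^ 2 / 2 - z ^ 2 / 2)

lemma barg_bound (Q : Polynomial ℤ) (z₀ : ℂ) :
    ∃ C : ℝ, 0 ≤ C ∧ ∀ (x : ℝ), ∀ z ∈ Metric.ball z₀ 1,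
      ‖(Polynomial.aeval ((Real.sqrt 2 : ℂ) * (x : ℂ) - z) Q : ℂ) * bargE x z‖
        ≤ C * Real.exp (-(x ^ 2) / 4) := by
  set n := Q.natDegree with hn
  set R : ℝ := ‖z₀‖ + 1 with hR
  have hR0 : 0 ≤ R := by positivity
  set S : ℝ := ∑ i ∈ Finset.range (n + 1), ‖((Q.coeff i : ℤ) : ℂ)‖ with hS
  have hS0 : 0 ≤ S := Finset.sum_nonneg fun i _ => norm_nonneg _
  set c₀ : ℝ := n * (1 + R) + R ^ 2 / 2 with hc₀
  set c₁ : ℝ := Real.sqrt 2 * (n + R) with hc₁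
  have hc₁0 : 0 ≤ c₁ := by positivity
  refine ⟨S * Real.exp (c₀ + c₁ ^ 2), by positivity, fun x z hz => ?_⟩
  have hzR : ‖z‖ ≤ R := by
    have := Metric.mem_ball.mp hz
    have : dist z z₀ ≤ 1 := le_of_lt this
    calc ‖z‖ = ‖z₀ + (z - z₀)‖ := by ring_nf
    _ ≤ ‖z₀‖ + ‖z - z₀‖ := norm_add_le _ _
    _ ≤ ‖z₀‖ + 1 := by
        have : ‖z - z₀‖ = dist z z₀ := (dist_eq_norm z z₀).symm
        linarith [this ▸ (Metric.mem_ball.mp hz).le]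
  set B : ℝ := 1 + R + Real.sqrt 2 * |x| with hB
  have hB1 : 1 ≤ B := by
    have : 0 ≤ Real.sqrt 2 * |x| := by positivity
    simp [hB]; linarith
  have hwB : ‖(Real.sqrt 2 : ℂ) * (x : ℂ) - z‖ ≤ B := by
    calc ‖(Real.sqrt 2 : ℂ) * (x : ℂ) - z‖ ≤ ‖(Real.sqrt 2 : ℂ) * (x : ℂ)‖ + ‖z‖ :=
          norm_sub_le _ _
    _ ≤ Real.sqrt 2 * |x| + R := by
        rw [norm_mul]
        gcongr
        · simp [Complex.norm_real, abs_of_nonneg (Real.sqrt_nonneg 2)]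
        · simp [Complex.norm_real]
    _ ≤ B := by simp [hB]; linarith
  -- bound polynomial part
  have hpoly : ‖(Polynomial.aeval ((Real.sqrt 2 : ℂ) * (x : ℂ) - z) Q : ℂ)‖ ≤ S * B ^ n := by
    rw [Polynomial.aeval_eq_sum_range]
    calc ‖∑ i ∈ Finset.range (n + 1), Q.coeff i • ((Real.sqrt 2 : ℂ) * (x : ℂ) - z) ^ i‖
        ≤ ∑ i ∈ Finset.range (n + 1), ‖Q.coeff i • ((Real.sqrt 2 : ℂ) * (x : ℂ) - z) ^ i‖ :=
          norm_sum_le _ _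
    _ ≤ ∑ i ∈ Finset.range (n + 1), ‖((Q.coeff i : ℤ) : ℂ)‖ * B ^ n := by
        refine Finset.sum_le_sum fun i hi => ?_
        rw [zsmul_eq_mul, norm_mul]
        gcongr
        have h1 : ‖((Real.sqrt 2 : ℂ) * (x : ℂ) - z) ^ i‖ ≤ B ^ i := by
          rw [norm_pow]
          exact pow_le_pow_left₀ (norm_nonneg _) hwB i
        refine h1.trans (pow_le_pow_right₀ (by linarith) ?_)
        exact Nat.lt_succ_iff.mp (Finset.mem_range.mp hi)
    _ = S * B ^ n := by rw [← Finset.sum_mul]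
  have hBn : B ^ n ≤ Real.exp (n * B) := by
    have h1 : B ≤ Real.exp B := by
      have := Real.add_one_le_exp B; linarith
    calc B ^ n ≤ (Real.exp B) ^ n := pow_le_pow_left₀ (by linarith) h1 n
    _ = Real.exp (n * B) := by rw [← Real.exp_nat_mul]
  -- bound exponential part
  have hE : ‖bargE x z‖ ≤ Real.exp (Real.sqrt 2 * R * |x| - x ^ 2 / 2 + R ^ 2 / 2) := by
    rw [bargE, Complex.norm_exp]
    apply Real.exp_le_exp.mpr
    have hre : ((Real.sqrt 2 : ℂ) * (x : ℂ) * z - (x : ℂ) ^ 2 / 2 - z ^ 2 / 2).re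
        = Real.sqrt 2 * x * z.re - x ^ 2 / 2 - (z.re ^ 2 - z.im ^ 2) / 2 := by
      simp [Complex.sub_re, Complex.mul_re, Complex.div_re, Complex.ofReal_re,
        Complex.ofReal_im, Complex.normSq, pow_two, Complex.mul_im]
    rw [hre]
    have h1 : Real.sqrt 2 * x * z.re ≤ Real.sqrt 2 * R * |x| := by
      have : Real.sqrt 2 * x * z.re ≤ |Real.sqrt 2 * x * z.re| := le_abs_self _
      refine this.trans ?_
      rw [abs_mul, abs_mul, abs_of_nonneg (Real.sqrt_nonneg 2)]
      have hzre : |z.re| ≤ R := (Complex.abs_re_le_norm z).trans hzR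
      calc Real.sqrt 2 * |x| * |z.re| ≤ Real.sqrt 2 * |x| * R := by
            gcongr
      _ = Real.sqrt 2 * R * |x| := by ring
    have h2 : z.im ^ 2 ≤ R ^ 2 := by
      have : |z.im| ≤ R := (Complex.abs_im_le_norm z).trans hzR
      calc z.im ^ 2 = |z.im| ^ 2 := (sq_abs _).symm
      _ ≤ R ^ 2 := by gcongr
    nlinarith [sq_nonneg z.re]
  calc ‖(Polynomial.aeval ((Real.sqrt 2 : ℂ) * (x : ℂ) - z) Q : ℂ) * bargE x z‖
      = ‖(Polynomial.aeval ((Real.sqrt 2 : ℂ) * (x : ℂ) - z) Q : ℂ)‖ * ‖bargE x z‖ :=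
        norm_mul _ _
  _ ≤ (S * Real.exp (n * B)) * Real.exp (Real.sqrt 2 * R * |x| - x ^ 2 / 2 + R ^ 2 / 2) :=
      mul_le_mul (hpoly.trans (by gcongr)) hE (norm_nonneg _) (by positivity)
  _ = S * Real.exp (n * B + (Real.sqrt 2 * R * |x| - x ^ 2 / 2 + R ^ 2 / 2)) := by
      rw [mul_assoc, ← Real.exp_add]
  _ ≤ S * Real.exp ((c₀ + c₁ ^ 2) + (-(x ^ 2) / 4)) := by
      gcongr S * Real.exp ?_
      have hxabs : x ^ 2 = |x| ^ 2 := (sq_abs x).symm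
      have key : c₁ * |x| - x ^ 2 / 4 ≤ c₁ ^ 2 := by
        nlinarith [sq_nonneg (|x| / 2 - c₁), abs_nonneg x]
      have hnB : (n : ℝ) * B = n * (1 + R) + Real.sqrt 2 * n * |x| := by
        rw [hB]; ring
      have hsplit : Real.sqrt 2 * n * |x| + Real.sqrt 2 * R * |x| = c₁ * |x| := by
        rw [hc₁]; ring
      rw [hnB]
      clear_value n R S B c₀ c₁
      linarith [key, hsplit, hc₀]
  _ = S * Real.exp (c₀ + c₁ ^ 2) * Real.exp (-(x ^ 2) / 4) := by
      rw [Real.exp_add, mul_assoc]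

lemma barg_cont (Q : Polynomial ℤ) (z : ℂ) :
    Continuous fun x : ℝ =>
      (Polynomial.aeval ((Real.sqrt 2 : ℂ) * (x : ℂ) - z) Q : ℂ) * bargE x z := by
  have h1 : Continuous fun x : ℝ => (Real.sqrt 2 : ℂ) * (x : ℂ) - z :=
    (continuous_const.mul Complex.continuous_ofReal).sub continuous_const
  exact ((Q.continuous_aeval).comp h1).mul
    (Complex.continuous_exp.comp (by fun_prop))

lemma barg_meas (f : ℝ → ℂ) (hf : AEStronglyMeasurable f (volume : Measure ℝ))
    (Q : Polynomial ℤ) (z : ℂ) :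
    AEStronglyMeasurable (fun x : ℝ => (starRingEnd ℂ) (f x) *
      (Polynomial.aeval ((Real.sqrt 2 : ℂ) * (x : ℂ) - z) Q : ℂ) * bargE x z)
      (volume : Measure ℝ) := by
  have h1 : AEStronglyMeasurable (fun x : ℝ => (starRingEnd ℂ) (f x)) volume :=
    Complex.continuous_conj.comp_aestronglyMeasurable hf
  simpa [mul_assoc, Pi.mul_def] using h1.mul (barg_cont Q z).aestronglyMeasurable

lemma barg_bound_integrable (f : ℝ → ℂ) (hf : MemLp f 2 (volume : Measure ℝ))
    (C : ℝ) (hC : 0 ≤ C) :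
    Integrable (fun x : ℝ => ‖f x‖ * (C * Real.exp (-(x ^ 2) / 4))) volume := by
  have hfsq : Integrable (fun x => ‖f x‖ ^ 2) volume := hf.norm.integrable_sq
  have hg : Integrable (fun x : ℝ => (C * Real.exp (-(x ^ 2) / 4)) ^ 2) volume := by
    have h0 : Integrable (fun x : ℝ => Real.exp (-((1:ℝ)/2) * x ^ 2)) volume :=
      integrable_exp_neg_mul_sq (by norm_num)
    have := h0.const_mul (C ^ 2)
    apply this.congr
    filter_upwards with x
    rw [mul_pow, pow_two (Real.exp _), ← Real.exp_add]
    ring_nf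
  refine Integrable.mono' (((hfsq.add hg).div_const 2))
    (hf.1.norm.mul ((continuous_const.mul (by fun_prop : Continuous
      (fun x : ℝ => Real.exp (-(x ^ 2) / 4)))).aestronglyMeasurable)) ?_
  filter_upwards with x
  have h1 : 0 ≤ ‖f x‖ := norm_nonneg _
  have h2 : 0 ≤ C * Real.exp (-(x ^ 2) / 4) := by positivity
  rw [Real.norm_eq_abs, abs_of_nonneg (by positivity)]
  simp only [Pi.add_apply]
  nlinarith [sq_nonneg (‖f x‖ - C * Real.exp (-(x ^ 2) / 4))]

lemma barg_integrable (f : ℝ → ℂ) (hf : MemLp f 2 (volume : Measure ℝ))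
    (Q : Polynomial ℤ) (z : ℂ) :
    Integrable (fun x : ℝ => (starRingEnd ℂ) (f x) *
      (Polynomial.aeval ((Real.sqrt 2 : ℂ) * (x : ℂ) - z) Q : ℂ) * bargE x z) volume := by
  obtain ⟨C, hC0, hC⟩ := barg_bound Q z
  refine Integrable.mono' (barg_bound_integrable f hf C hC0) (barg_meas f hf.1 Q z) ?_
  filter_upwards with x
  rw [mul_assoc, norm_mul]
  have : ‖(starRingEnd ℂ) (f x)‖ = ‖f x‖ := by simp
  rw [this]
  exact mul_le_mul_of_nonneg_left (hC x z (Metric.mem_ball_self one_pos)) (norm_nonneg _)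

lemma barg_hasDerivAt (f : ℝ → ℂ) (x : ℝ) (N : ℕ) (z : ℂ) :
    HasDerivAt (fun z : ℂ => (starRingEnd ℂ) (f x) *
        (Polynomial.aeval ((Real.sqrt 2 : ℂ) * (x : ℂ) - z) (Polynomial.hermite N) : ℂ) *
        bargE x z)
      ((starRingEnd ℂ) (f x) *
        (Polynomial.aeval ((Real.sqrt 2 : ℂ) * (x : ℂ) - z) (Polynomial.hermite (N + 1)) : ℂ) *
        bargE x z) z := by
  set w : ℂ := (Real.sqrt 2 : ℂ) * (x : ℂ) - z with hw
  have hlin : HasDerivAt (fun z : ℂ => (Real.sqrt 2 : ℂ) * (x : ℂ) - z) (-1) z := by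
    simpa using (hasDerivAt_id z).const_sub ((Real.sqrt 2 : ℂ) * (x : ℂ))
  have hP : HasDerivAt
      (fun z : ℂ => (Polynomial.aeval ((Real.sqrt 2 : ℂ) * (x : ℂ) - z) (Polynomial.hermite N) : ℂ))
      (-(Polynomial.aeval w ((Polynomial.hermite N).derivative) : ℂ)) z := by
    have h1 := (Polynomial.hermite N).hasDerivAt_aeval w
    exact (h1.comp z hlin).congr_deriv (mul_neg_one _)
  have hexp : HasDerivAt (fun z : ℂ => (Real.sqrt 2 : ℂ) * (x : ℂ) * z - (x : ℂ) ^ 2 / 2 - z ^ 2 / 2)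
      (w) z := by
    have h1 : HasDerivAt (fun z : ℂ => (Real.sqrt 2 : ℂ) * (x : ℂ) * z)
        ((Real.sqrt 2 : ℂ) * (x : ℂ)) z := by
      simpa using (hasDerivAt_id z).const_mul ((Real.sqrt 2 : ℂ) * (x : ℂ))
    have h2 : HasDerivAt (fun z : ℂ => z ^ 2 / 2) z z := by
      simpa using (hasDerivAt_pow 2 z).div_const 2
    exact ((h1.sub_const ((x : ℂ) ^ 2 / 2)).sub h2).congr_deriv hw.symm
  have hE : HasDerivAt (fun z : ℂ => bargE x z) (w * bargE x z) z := by
    simpa [bargE, mul_comm] using hexp.cexp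
  have := ((hP.mul hE).const_mul ((starRingEnd ℂ) (f x)))
  simp only [mul_assoc]
  refine this.congr_deriv ?_
  rw [Polynomial.hermite_succ]
  simp only [map_sub, map_mul, Polynomial.aeval_X]
  ring

lemma barg_step (f : ℝ → ℂ) (hf : MemLp f 2 (volume : Measure ℝ)) (N : ℕ) (z₀ : ℂ) :
    HasDerivAt (fun z : ℂ => ∫ x : ℝ, (starRingEnd ℂ) (f x) *
        (Polynomial.aeval ((Real.sqrt 2 : ℂ) * (x : ℂ) - z) (Polynomial.hermite N) : ℂ) *
        bargE x z)
      (∫ x : ℝ, (starRingEnd ℂ) (f x) *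
        (Polynomial.aeval ((Real.sqrt 2 : ℂ) * (x : ℂ) - z₀) (Polynomial.hermite (N + 1)) : ℂ) *
        bargE x z₀) z₀ := by
  obtain ⟨C, hC0, hC⟩ := barg_bound (Polynomial.hermite (N + 1)) z₀
  refine (hasDerivAt_integral_of_dominated_loc_of_deriv_le (μ := (volume : Measure ℝ))
    (F := fun z x => (starRingEnd ℂ) (f x) *
        (Polynomial.aeval ((Real.sqrt 2 : ℂ) * (x : ℂ) - z) (Polynomial.hermite N) : ℂ) *
        bargE x z)
    (F' := fun z x => (starRingEnd ℂ) (f x) *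
        (Polynomial.aeval ((Real.sqrt 2 : ℂ) * (x : ℂ) - z) (Polynomial.hermite (N + 1)) : ℂ) *
        bargE x z)
    (bound := fun x => ‖f x‖ * (C * Real.exp (-(x ^ 2) / 4)))
    (Metric.ball_mem_nhds z₀ one_pos) ?_ ?_ ?_ ?_ ?_ ?_).2
  · exact Filter.Eventually.of_forall fun z => barg_meas f hf.1 _ z
  · exact barg_integrable f hf _ z₀
  · exact barg_meas f hf.1 _ z₀
  · filter_upwards with x
    intro z hz
    rw [mul_assoc, norm_mul]
    have h1 : ‖(starRingEnd ℂ) (f x)‖ = ‖f x‖ := by simp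
    rw [h1]
    exact mul_le_mul_of_nonneg_left (hC x z hz) (norm_nonneg _)
  · exact barg_bound_integrable f hf C hC0
  · exact Filter.Eventually.of_forall fun x z _ => barg_hasDerivAt f x N z

lemma barg_form (f : ℝ → ℂ) (N : ℕ) (z : ℂ) :
    Complex.exp (-z ^ 2 / 2) / ((π ^ ((1 : ℝ) / 4) : ℝ) : ℂ) *
      ∫ x : ℝ, (starRingEnd ℂ) (f x) *
        Polynomial.aeval ((Real.sqrt 2 : ℂ) * (x : ℂ) - z) (Polynomial.hermite N) *
        Complex.exp ((Real.sqrt 2 : ℂ) * (x : ℂ) * z - (x : ℂ) ^ 2 / 2)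
    = (((π ^ ((1 : ℝ) / 4) : ℝ) : ℂ))⁻¹ *
      ∫ x : ℝ, (starRingEnd ℂ) (f x) *
        (Polynomial.aeval ((Real.sqrt 2 : ℂ) * (x : ℂ) - z) (Polynomial.hermite N) : ℂ) *
        bargE x z := by
  rw [div_eq_mul_inv, mul_comm (Complex.exp _), mul_assoc, ← integral_const_mul]
  congr 1
  apply integral_congr_ae
  filter_upwards with x
  rw [bargE]
  rw [show (Real.sqrt 2 : ℂ) * (x : ℂ) * z - (x : ℂ) ^ 2 / 2 - z ^ 2 / 2
      = (-z ^ 2 / 2) + ((Real.sqrt 2 : ℂ) * (x : ℂ) * z - (x : ℂ) ^ 2 / 2) from by ring,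
    Complex.exp_add]
  ring

/-- The `N`-th complex derivative of the Bargmann transform of `f ∈ L²(ℝ,ℂ)` at `z` equals
`(e^{−z²/2}/π^{1/4}) ∫_ℝ conj(f(x)) He_N(√2·x − z) e^{√2·xz − x²/2} dx`, where `He_N` is the
probabilists' Hermite polynomial. -/
theorem iteratedDeriv_bargmann (f : ℝ → ℂ) (hf : MemLp f 2 (volume : Measure ℝ))
    (N : ℕ) (z : ℂ) :
    iteratedDeriv N (bargmann f) z =
      Complex.exp (-z ^ 2 / 2) / ((π ^ ((1 : ℝ) / 4) : ℝ) : ℂ) *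
        ∫ x : ℝ, (starRingEnd ℂ) (f x) *
          Polynomial.aeval ((Real.sqrt 2 : ℂ) * (x : ℂ) - z) (Polynomial.hermite N) *
          Complex.exp ((Real.sqrt 2 : ℂ) * (x : ℂ) * z - (x : ℂ) ^ 2 / 2) := by
  induction N generalizing z with
  | zero =>
    rw [iteratedDeriv_zero, bargmann]
    simp [Polynomial.hermite_zero]
  | succ N ih =>
    rw [iteratedDeriv_succ]
    have hfun : iteratedDeriv N (bargmann f) = fun z' : ℂ =>
        (((π ^ ((1 : ℝ) / 4) : ℝ) : ℂ))⁻¹ *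
          ∫ x : ℝ, (starRingEnd ℂ) (f x) *
            (Polynomial.aeval ((Real.sqrt 2 : ℂ) * (x : ℂ) - z') (Polynomial.hermite N) : ℂ) *
            bargE x z' := by
      funext z'
      rw [ih z', barg_form]
    rw [hfun]
    have hstep := (barg_step f hf N z).const_mul ((((π ^ ((1 : ℝ) / 4) : ℝ) : ℂ))⁻¹)
    rw [hstep.deriv, ← barg_form]
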